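/- Let R → R' be a flat local homomorphism of Noetherian local rings with infinite residue fields, and I an R-ideal such that core(I) is a finite intersection of reductions J₁,...,J_s of I. Then (core(I))·R' ⊇ core(I·R'); i.e., core(IR') ⊆ (core(I))R'. -/

import Mathlib

open IsLocalRing Polynomial

section Defs
variable (R : Type*) [CommRing R]

/-- `J` is a reduction of `I`: `J ⊆ I` and `I^(r+1) = J·I^r` for some `r ≥ 0`. -/
def IsReduction (I J : Ideal R) : Prop :=
  J ≤ I ∧ ∃ r : ℕ, I ^ (r + 1) = J * I ^ r

/-- The core of an ideal: the intersection of all its reductions. -/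
noncomputable def coreIdeal (I : Ideal R) : Ideal R :=
  sInf {J | IsReduction R I J}

/-- Minimal number of generators of an ideal. -/
noncomputable def mu (I : Ideal R) : ℕ :=
  sInf {n | ∃ s : Finset R, s.card = n ∧ Ideal.span (s : Set R) = I}

/-- Length of a module, as the Krull dimension of its submodule lattice. -/
noncomputable def modLength (M : Type*) [AddCommGroup M] [Module R M] : WithBot ℕ∞ :=
  Order.krullDim (Submodule R M)

/-- Analytic spread: Krull dimension of the special fiber ring of the Rees algebra. -/
noncomputable def analyticSpread [IsLocalRing R] (I : Ideal R) : WithBot ℕ∞ :=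
  ringKrullDim ((reesAlgebra I) ⧸ (Ideal.map (algebraMap R (reesAlgebra I)) (maximalIdeal R)))

/-- Height of an ideal: infimum of heights of primes containing it. -/
noncomputable def idealHeight (I : Ideal R) : ℕ∞ :=
  ⨅ p : {p : PrimeSpectrum R // I ≤ p.asIdeal}, Order.height p.1

/-- γ(I): least number of minimal reductions whose intersection is the core. -/
noncomputable def gammaI (I : Ideal R) : ℕ :=
  sInf {t | ∃ J : Fin t → Ideal R,
    (∀ i, Minimal (IsReduction R I) (J i)) ∧ coreIdeal R I = ⨅ i, J i}

/-- `I` satisfies the condition `G_s`. -/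
def SatisfiesGs (I : Ideal R) (s : ℕ) : Prop :=
  ∀ p : PrimeSpectrum R, I ≤ p.asIdeal → Order.height p < (s : ℕ∞) →
    (mu (Localization.AtPrime p.asIdeal)
      (I.map (algebraMap R (Localization.AtPrime p.asIdeal))) : ℕ∞) ≤ Order.height p

/-- `K` is a geometric `i`-residual intersection of `I`. -/
def IsGeomResidualIntersection (I K : Ideal R) (i : ℕ) : Prop :=
  K ≠ ⊤ ∧ idealHeight R I ≤ (i : ℕ∞) ∧
  ∃ J : Ideal R, J ≤ I ∧ (∃ g : Fin i → R, J = Ideal.span (Set.range g)) ∧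
    K = Submodule.colon J I ∧ (i : ℕ∞) ≤ idealHeight R K ∧
    ((i : ℕ∞) + 1) ≤ idealHeight R (I ⊔ K)

/-- depth of a local ring is at least `n`. -/
def HasDepthGE (A : Type*) [CommRing A] [IsLocalRing A] (n : ℕ) : Prop :=
  ∃ rs : List A, rs.length = n ∧ (∀ x ∈ rs, x ∈ maximalIdeal A) ∧
    RingTheory.Sequence.IsRegular A rs

/-- Serre's condition `S₂` for a ring. -/
def SerreS2 (A : Type*) [CommRing A] : Prop :=
  ∀ p : PrimeSpectrum A, ∀ n : ℕ, (n : ℕ∞) ≤ min 2 (Order.height p) →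
    HasDepthGE (Localization.AtPrime p.asIdeal) n

/-- `I` is weakly `s`-residually `S₂`. -/
def WeaklyResiduallyS2 (I : Ideal R) (s : ℕ) : Prop :=
  ∀ i : ℕ, i ≤ s → ∀ K : Ideal R, IsGeomResidualIntersection R I K i → SerreS2 (R ⧸ K)

/-- A local ring is Cohen–Macaulay: its depth is at least its dimension. -/
def IsCMLocalRing (A : Type*) [CommRing A] [IsLocalRing A] : Prop :=
  ∀ n : ℕ, (n : WithBot ℕ∞) ≤ ringKrullDim A → HasDepthGE A n

end Defs

section FlatAux

open TensorProduct LinearMap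

variable {R A : Type*} [CommRing R] [CommRing A] [Algebra R A]

/-- Under `rid`, the range of `lTensor` of the inclusion of an ideal corresponds to
the extension of the ideal. -/
lemma mem_range_lTensor_subtype_iff (J : Ideal R) (t : A ⊗[R] R) :
    t ∈ LinearMap.range ((Submodule.subtype (J : Submodule R R)).lTensor A) ↔
      (TensorProduct.rid R A) t ∈ J.map (algebraMap R A) := by
  constructor
  · rintro ⟨t', rfl⟩
    induction t' using TensorProduct.induction_on with
    | zero => simp
    | tmul a j =>
        simp only [lTensor_tmul, Submodule.coe_subtype, rid_tmul]
        rw [Algebra.smul_def, mul_comm]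
        exact Ideal.mul_mem_left _ _ (Ideal.mem_map_of_mem _ j.2)
    | add x y hx hy =>
        simp only [map_add]
        exact Submodule.add_mem _ hx hy
  · intro h
    have key : ∀ x ∈ J.map (algebraMap R A),
        (TensorProduct.rid R A).symm x ∈
          LinearMap.range ((Submodule.subtype (J : Submodule R R)).lTensor A) := by
      intro x hx
      have hx' : x ∈ Submodule.span A ((algebraMap R A) '' (J : Set R)) := hx
      refine Submodule.span_induction
        (p := fun y _ => (TensorProduct.rid R A).symm y ∈
          LinearMap.range ((Submodule.subtype (J : Submodule R R)).lTensor A))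
        ?_ ?_ ?_ ?_ hx'
      · rintro y ⟨j, hj, rfl⟩
        refine ⟨(1 : A) ⊗ₜ[R] (⟨j, hj⟩ : J), ?_⟩
        rw [LinearEquiv.eq_symm_apply]
        simp [Algebra.smul_def]
      · simp
      · intro u v hum hvm hu hv
        rw [map_add]
        exact Submodule.add_mem _ hu hv
      · intro a x hxm hx
        obtain ⟨t', ht'⟩ := hx
        -- produce a preimage for `a • x`
        have C : ∀ t' : A ⊗[R] (J : Submodule R R), ∃ t'' : A ⊗[R] (J : Submodule R R),
            (TensorProduct.rid R A) ((Submodule.subtype (J : Submodule R R)).lTensor A t'') =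
              a * (TensorProduct.rid R A) ((Submodule.subtype (J : Submodule R R)).lTensor A t') := by
          intro t'
          induction t' using TensorProduct.induction_on with
          | zero => exact ⟨0, by simp⟩
          | tmul b j =>
              refine ⟨(a * b) ⊗ₜ[R] j, ?_⟩
              simp only [lTensor_tmul, Submodule.coe_subtype, rid_tmul]
              rw [mul_smul_comm]
          | add u v hu hv =>
              obtain ⟨tu, htu⟩ := hu
              obtain ⟨tv, htv⟩ := hv
              exact ⟨tu + tv, by simp [htu, htv, mul_add]⟩
        obtain ⟨t'', ht''⟩ := C t'
        refine ⟨t'', ?_⟩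
        rw [LinearEquiv.eq_symm_apply] at ht' ⊢
        rw [ht'', ht', smul_eq_mul]
    have := key _ h
    simpa using this

lemma prodRight_lTensor_prod {N P : Type*} [AddCommGroup N] [AddCommGroup P]
    [Module R N] [Module R P] (g : R →ₗ[R] N) (h : R →ₗ[R] P) (t : A ⊗[R] R) :
    (TensorProduct.prodRight R R A N P) ((g.prod h).lTensor A t) =
      ((g.lTensor A) t, (h.lTensor A) t) := by
  induction t using TensorProduct.induction_on with
  | zero => simp; rfl
  | tmul a r => simp
  | add x y hx hy => simp only [map_add, hx, hy, Prod.mk_add_mk]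

/-- Flat base change commutes with intersections of two ideals. -/
lemma Ideal.map_inf_of_flat [Module.Flat R A] (J₁ J₂ : Ideal R) :
    (J₁ ⊓ J₂).map (algebraMap R A) = J₁.map (algebraMap R A) ⊓ J₂.map (algebraMap R A) := by
  refine le_antisymm (le_inf (Ideal.map_mono inf_le_left) (Ideal.map_mono inf_le_right)) ?_
  intro x hx
  set e := TensorProduct.rid R A
  set t := e.symm x with ht
  have hxt : e t = x := e.apply_symm_apply x
  have h1 : t ∈ LinearMap.range ((Submodule.subtype (J₁ : Submodule R R)).lTensor A) :=
    (mem_range_lTensor_subtype_iff J₁ t).2 (by rw [hxt]; exact hx.1)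
  have h2 : t ∈ LinearMap.range ((Submodule.subtype (J₂ : Submodule R R)).lTensor A) :=
    (mem_range_lTensor_subtype_iff J₂ t).2 (by rw [hxt]; exact hx.2)
  -- kernels of the tensored quotient maps
  have e1 : Function.Exact ((Submodule.subtype (J₁ : Submodule R R)).lTensor A)
      ((Submodule.mkQ (J₁ : Submodule R R)).lTensor A) :=
    Module.Flat.lTensor_exact A (LinearMap.exact_subtype_mkQ _)
  have e2 : Function.Exact ((Submodule.subtype (J₂ : Submodule R R)).lTensor A)
      ((Submodule.mkQ (J₂ : Submodule R R)).lTensor A) :=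
    Module.Flat.lTensor_exact A (LinearMap.exact_subtype_mkQ _)
  have hz1 : ((Submodule.mkQ (J₁ : Submodule R R)).lTensor A) t = 0 :=
    (e1 t).2 h1
  have hz2 : ((Submodule.mkQ (J₂ : Submodule R R)).lTensor A) t = 0 :=
    (e2 t).2 h2
  set f : R →ₗ[R] (R ⧸ (J₁ : Submodule R R)) × (R ⧸ (J₂ : Submodule R R)) :=
    (Submodule.mkQ (J₁ : Submodule R R)).prod (Submodule.mkQ (J₂ : Submodule R R)) with hf
  have hzf : (f.lTensor A) t = 0 := by
    have := prodRight_lTensor_prod (A := A)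
      (Submodule.mkQ (J₁ : Submodule R R)) (Submodule.mkQ (J₂ : Submodule R R)) t
    rw [hz1, hz2] at this
    have h0 : (TensorProduct.prodRight R R A _ _) ((f.lTensor A) t) = 0 := by
      rw [hf, this]; rfl
    exact (LinearEquiv.map_eq_zero_iff _).1 h0
  have hker : LinearMap.ker f = ((J₁ ⊓ J₂ : Ideal R) : Submodule R R) := by
    rw [hf, LinearMap.ker_prod, Submodule.ker_mkQ, Submodule.ker_mkQ]
  have exf : Function.Exact ((LinearMap.ker f).subtype.lTensor A) (f.lTensor A) :=
    Module.Flat.lTensor_exact A f.exact_subtype_ker_map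
  rw [hker] at exf
  have hrange : t ∈ LinearMap.range
      ((Submodule.subtype (((J₁ ⊓ J₂ : Ideal R) : Submodule R R))).lTensor A) :=
    (exf t).1 hzf
  have := (mem_range_lTensor_subtype_iff (J₁ ⊓ J₂) t).1 hrange
  rwa [hxt] at this

end FlatAux

/-- If `R → R'` is a flat local map and `core(I)` is a finite intersection of reductions
of `I`, then `core(IR') ⊆ (core(I))R'`. -/
theorem stmt13 {R R' : Type*} [CommRing R] [CommRing R'] [IsNoetherianRing R]
    [IsNoetherianRing R'] [IsLocalRing R] [IsLocalRing R'] [Algebra R R']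
    [Module.Flat R R'] [IsLocalHom (algebraMap R R')]
    [Infinite (ResidueField R)] [Infinite (ResidueField R')]
    (I : Ideal R) (s : ℕ) (J : Fin s → Ideal R)
    (hJ : ∀ i, IsReduction R I (J i)) (hcore : coreIdeal R I = ⨅ i, J i) :
    coreIdeal R' (I.map (algebraMap R R')) ≤ (coreIdeal R I).map (algebraMap R R') := by
  classical
  -- each J i extends to a reduction of I R'
  have hred : ∀ i, IsReduction R' (I.map (algebraMap R R')) ((J i).map (algebraMap R R')) := by
    intro i
    obtain ⟨hle, r, hr⟩ := hJ i
    refine ⟨Ideal.map_mono hle, r, ?_⟩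
    rw [← Ideal.map_pow, hr, Ideal.map_mul, Ideal.map_pow]
  have h1 : coreIdeal R' (I.map (algebraMap R R')) ≤ ⨅ i, (J i).map (algebraMap R R') :=
    le_iInf fun i => sInf_le (hred i)
  have key : ∀ t : Finset (Fin s),
      (t.inf J).map (algebraMap R R') = t.inf (fun i => (J i).map (algebraMap R R')) := by
    intro t
    induction t using Finset.cons_induction with
    | empty => simp [Ideal.map_top]
    | cons a t' ha ih => rw [Finset.inf_cons, Finset.inf_cons, Ideal.map_inf_of_flat, ih]
  have h2 : (⨅ i, (J i).map (algebraMap R R')) = (⨅ i, J i).map (algebraMap R R') := by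
    rw [← Finset.inf_univ_eq_iInf, ← Finset.inf_univ_eq_iInf, key]
  rw [hcore, ← h2]
  exact h1
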